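/- Multiplication induces an isomorphism of right W(F,H)-modules ℂ[H] ⊗ W(F,H) → R(F,H); in particular, R(F,H) is a free right module over W(F,H) with basis {H^p : p ≥ 0}. -/

import Mathlib

open Polynomial

inductive SmithGen : Type
  | E | F | H

open SmithGen in
inductive SmithRel (f : ℂ[X]) : FreeAlgebra ℂ SmithGen → FreeAlgebra ℂ SmithGen → Prop
  | ef : SmithRel f (FreeAlgebra.ι ℂ E * FreeAlgebra.ι ℂ F - FreeAlgebra.ι ℂ F * FreeAlgebra.ι ℂ E)
      (aeval (FreeAlgebra.ι ℂ H) f)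
  | he : SmithRel f (FreeAlgebra.ι ℂ H * FreeAlgebra.ι ℂ E - FreeAlgebra.ι ℂ E * FreeAlgebra.ι ℂ H)
      (FreeAlgebra.ι ℂ E)
  | hf : SmithRel f (FreeAlgebra.ι ℂ H * FreeAlgebra.ι ℂ F - FreeAlgebra.ι ℂ F * FreeAlgebra.ι ℂ H)
      (-FreeAlgebra.ι ℂ F)

/-- Smith's algebra `R(f)`, similar to `U(sl₂)`. -/
abbrev SmithAlgebra (f : ℂ[X]) : Type := RingQuot (SmithRel f)

noncomputable def SmithE (f : ℂ[X]) : SmithAlgebra f :=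
  RingQuot.mkAlgHom ℂ (SmithRel f) (FreeAlgebra.ι ℂ SmithGen.E)

noncomputable def SmithF (f : ℂ[X]) : SmithAlgebra f :=
  RingQuot.mkAlgHom ℂ (SmithRel f) (FreeAlgebra.ι ℂ SmithGen.F)

noncomputable def SmithH (f : ℂ[X]) : SmithAlgebra f :=
  RingQuot.mkAlgHom ℂ (SmithRel f) (FreeAlgebra.ι ℂ SmithGen.H)

/-- The Casimir element `Ω = 2FE + u(H+1)`. -/
noncomputable def SmithOmega (f u : ℂ[X]) : SmithAlgebra f :=
  2 * SmithF f * SmithE f + aeval (SmithH f) (u.comp (X + 1))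

/-- The subalgebra `R(E)` of `R(f)` generated by `E`. -/
noncomputable def SmithRE (f : ℂ[X]) : Subalgebra ℂ (SmithAlgebra f) :=
  Algebra.adjoin ℂ {SmithE f}

/-- The subalgebra `R(F,H)` of `R(f)` generated by `F` and `H`. -/
noncomputable def SmithRFH (f : ℂ[X]) : Subalgebra ℂ (SmithAlgebra f) :=
  Algebra.adjoin ℂ {SmithF f, SmithH f}

/-- `E` as an element of `R(E)`. -/
noncomputable def SmithE' (f : ℂ[X]) : SmithRE f :=
  ⟨SmithE f, Algebra.self_mem_adjoin_singleton ℂ _⟩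

/-- The subspace `R(f)·R_η(E)` of `R(f)`, where `R_η(E) = ker η`. -/
noncomputable def SmithEtaIdeal (f : ℂ[X]) (η : SmithRE f →ₐ[ℂ] ℂ) :
    Submodule ℂ (SmithAlgebra f) :=
  Submodule.span ℂ {z | ∃ (r : SmithAlgebra f) (x : SmithRE f), η x = 0 ∧ z = r * (x : SmithAlgebra f)}

/-- `Ω^η = 2η(E)F + u(H+1)`, the image of the Casimir element under the projection `π`. -/
noncomputable def SmithOmegaEta (f u : ℂ[X]) (η : SmithRE f →ₐ[ℂ] ℂ) : SmithAlgebra f :=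
  algebraMap ℂ (SmithAlgebra f) (2 * η (SmithE' f)) * SmithF f +
    aeval (SmithH f) (u.comp (X + 1))

/-- `W(F,H)`, the image of the center under `π`, i.e. the subalgebra generated by `Ω^η`. -/
noncomputable def SmithW (f u : ℂ[X]) (η : SmithRE f →ₐ[ℂ] ℂ) : Subalgebra ℂ (SmithAlgebra f) :=
  Algebra.adjoin ℂ {SmithOmegaEta f u η}


noncomputable section

abbrev AMod : Type := Polynomial (Polynomial ℂ)

/-- A "weighted shift" operator on `ℂ[t][x]`: sends `x^n·a ↦ x^(d n)·(φ n · a)`. -/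
noncomputable def wop (d : ℕ → ℕ) (φ : ℕ → Polynomial ℂ) : AMod →ₗ[Polynomial ℂ] AMod where
  toFun p := p.sum fun n a => monomial (d n) (φ n * a)
  map_add' p q := Polynomial.sum_add_index p q _ (fun i => by simp) (fun i a b => by
    rw [mul_add, map_add])
  map_smul' b p := by
    dsimp only [RingHom.id_apply]
    rw [Polynomial.sum_smul_index _ _ _ (fun i => by simp)]
    rw [Polynomial.sum_def, Polynomial.sum_def, Finset.smul_sum]
    refine Finset.sum_congr rfl fun n _ => ?_
    rw [smul_monomial, smul_eq_mul, mul_left_comm]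

theorem wop_monomial (d : ℕ → ℕ) (φ : ℕ → Polynomial ℂ) (n : ℕ) (a : Polynomial ℂ) :
    wop d φ (monomial n a) = monomial (d n) (φ n * a) := by
  simp only [wop, LinearMap.coe_mk, AddHom.coe_mk]
  exact Polynomial.sum_monomial_index a _ (by simp)

noncomputable def Fh : Module.End ℂ AMod := ((wop (· + 1) fun _ => 1).restrictScalars ℂ)
noncomputable def Hh : Module.End ℂ AMod := ((wop id fun n => X - C (n : ℂ)).restrictScalars ℂ)
noncomputable def phiE (u : ℂ[X]) (n : ℕ) : ℂ[X] :=
  C (1/2 : ℂ) * (u.comp (X + 1) - u.comp (X + C (1 - (n : ℂ))))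
noncomputable def Eh (u : ℂ[X]) : Module.End ℂ AMod := ((wop (· - 1) (phiE u)).restrictScalars ℂ)

@[simp] theorem Fh_monomial (n a) : Fh (monomial n a) = monomial (n + 1) a := by
  show wop _ _ _ = _
  rw [wop_monomial, one_mul]
@[simp] theorem Hh_monomial (n a) : Hh (monomial n a) = monomial n ((X - C (n:ℂ)) * a) := by
  show wop _ _ _ = _
  rw [wop_monomial]; rfl
theorem Eh_monomial (u n a) : Eh u (monomial n a) = monomial (n - 1) (phiE u n * a) := by
  show wop _ _ _ = _
  rw [wop_monomial]

@[simp] theorem phiE_zero (u : ℂ[X]) : phiE u 0 = 0 := by simp [phiE]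

theorem aeval_Hh_monomial (g : ℂ[X]) (n : ℕ) (a : Polynomial ℂ) :
    (aeval Hh g) (monomial n a) = monomial n (g.comp (X - C (n:ℂ)) * a) := by
  induction g using Polynomial.induction_on generalizing a with
  | C c =>
      rw [aeval_C, Module.algebraMap_end_apply, smul_monomial, C_comp, smul_eq_C_mul]
  | add p q hp hq => rw [map_add, LinearMap.add_apply, hp, hq, add_comp, add_mul, map_add]
  | monomial k c hk =>
      rw [pow_succ, ← mul_assoc, map_mul, aeval_X, Module.End.mul_apply, Hh_monomial, hk,
        mul_comp, mul_comp, C_comp, pow_comp, X_comp, mul_comp, C_comp, pow_comp, X_comp]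
      ring_nf

end

noncomputable section

open SmithGen in
def smithGenMap (u : ℂ[X]) : SmithGen → Module.End ℂ AMod
  | E => Eh u
  | F => Fh
  | H => Hh

variable {f u : ℂ[X]}

theorem phiE_succ_sub (u : ℂ[X]) (hu : f = C (1/2 : ℂ) * (u.comp (X + 1) - u)) (n : ℕ) :
    phiE u (n + 1) - phiE u n = f.comp (X - C (n:ℂ)) := by
  subst hu
  rw [mul_comp, sub_comp, C_comp, Polynomial.comp_assoc]
  simp only [phiE, add_comp, X_comp, one_comp, Nat.cast_add, Nat.cast_one]
  rw [show (X : ℂ[X]) - C (n:ℂ) + 1 = X + C (1 - (n:ℂ)) by rw [map_sub, map_one]; ring]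
  rw [show (X : ℂ[X]) - C (n:ℂ) = X + C (1 - ((n:ℂ)+1)) by rw [map_sub, map_add, map_one]; ring]
  ring

theorem smith_rel_check (hu : f = C (1/2 : ℂ) * (u.comp (X + 1) - u)) :
    ∀ ⦃x y : FreeAlgebra ℂ SmithGen⦄, SmithRel f x y →
      (FreeAlgebra.lift ℂ (smithGenMap u)) x = (FreeAlgebra.lift ℂ (smithGenMap u)) y := by
  intro x y rel
  cases rel with
  | ef =>
      rw [map_sub, map_mul, map_mul, ← Polynomial.aeval_algHom_apply]
      simp only [FreeAlgebra.lift_ι_apply, smithGenMap]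
      refine LinearMap.ext fun p => ?_
      induction p using Polynomial.induction_on' with
      | add p q hp hq => rw [map_add, map_add, hp, hq]
      | monomial n a =>
          rw [LinearMap.sub_apply, Module.End.mul_apply, Module.End.mul_apply, Fh_monomial,
            Eh_monomial, Eh_monomial, Fh_monomial, aeval_Hh_monomial]
          rw [← phiE_succ_sub u hu n, sub_mul]
          rw [show ((monomial (n - 1 + 1)) (phiE u n * a)) = monomial n (phiE u n * a) by
            cases n with
            | zero => simp
            | succ k => rfl]
          rw [map_sub]
          rw [Nat.add_sub_cancel]
  | he =>
      rw [map_sub, map_mul, map_mul]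
      simp only [FreeAlgebra.lift_ι_apply, smithGenMap]
      refine LinearMap.ext fun p => ?_
      induction p using Polynomial.induction_on' with
      | add p q hp hq => rw [map_add, map_add, hp, hq]
      | monomial n a =>
          rw [LinearMap.sub_apply, Module.End.mul_apply, Module.End.mul_apply, Eh_monomial,
            Hh_monomial, Hh_monomial, Eh_monomial]
          cases n with
          | zero => simp
          | succ k =>
              rw [show (k+1) - 1 = k from rfl, ← map_sub]
              congr 1
              simp only [Nat.cast_succ, map_add, map_one]
              ring
  | hf =>
      rw [map_sub, map_mul, map_mul, map_neg]
      simp only [FreeAlgebra.lift_ι_apply, smithGenMap]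
      refine LinearMap.ext fun p => ?_
      induction p using Polynomial.induction_on' with
      | add p q hp hq => rw [map_add, map_add, hp, hq]
      | monomial n a =>
          rw [LinearMap.sub_apply, Module.End.mul_apply, Module.End.mul_apply, Fh_monomial,
            Hh_monomial, Hh_monomial, Fh_monomial, LinearMap.neg_apply, Fh_monomial,
            ← map_sub, ← map_neg]
          congr 1
          simp only [Nat.cast_succ, map_add, map_one]
          ring

end



noncomputable section

variable {f u : ℂ[X]}

noncomputable def smithRep (f u : ℂ[X]) (hu : f = C (1/2 : ℂ) * (u.comp (X + 1) - u)) :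
    SmithAlgebra f →ₐ[ℂ] Module.End ℂ AMod :=
  RingQuot.liftAlgHom ℂ ⟨FreeAlgebra.lift ℂ (smithGenMap u), smith_rel_check hu⟩

variable (hu : f = C (1/2 : ℂ) * (u.comp (X + 1) - u))

theorem smithRep_H : smithRep f u hu (SmithH f) = Hh := by
  rw [SmithH, smithRep, RingQuot.liftAlgHom_mkAlgHom_apply, FreeAlgebra.lift_ι_apply]
  rfl

theorem smithRep_F : smithRep f u hu (SmithF f) = Fh := by
  rw [SmithF, smithRep, RingQuot.liftAlgHom_mkAlgHom_apply, FreeAlgebra.lift_ι_apply]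
  rfl

noncomputable def OmegaH (u : ℂ[X]) (e : ℂ) : Module.End ℂ AMod :=
  algebraMap ℂ _ (2*e) * Fh + aeval Hh (u.comp (X+1))

theorem smithRep_omega (η : SmithRE f →ₐ[ℂ] ℂ) :
    smithRep f u hu (SmithOmegaEta f u η) = OmegaH u (η (SmithE' f)) := by
  rw [SmithOmegaEta, OmegaH, map_add, map_mul, AlgHom.commutes,
    ← Polynomial.aeval_algHom_apply, smithRep_H, smithRep_F]

theorem coeff_Hh (p : AMod) (j : ℕ) : (Hh p).coeff j = (X - C (j:ℂ)) * p.coeff j := by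
  induction p using Polynomial.induction_on' with
  | add p q hp hq => rw [map_add, coeff_add, coeff_add, hp, hq, mul_add]
  | monomial n a =>
      simp only [Hh_monomial, coeff_monomial]
      split_ifs with h
      · subst h; rfl
      · rw [mul_zero]

theorem coeff_Hh_pow (k : ℕ) (p : AMod) (j : ℕ) :
    ((Hh^k) p).coeff j = (X - C (j:ℂ))^k * p.coeff j := by
  induction k generalizing p with
  | zero => simp
  | succ k ih =>
      rw [pow_succ, Module.End.mul_apply, ih, coeff_Hh, pow_succ]
      ring

theorem coeff_aeval_Hh (g : ℂ[X]) (p : AMod) (j : ℕ) :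
    ((aeval Hh g) p).coeff j = g.comp (X - C (j:ℂ)) * p.coeff j := by
  induction p using Polynomial.induction_on' with
  | add p q hp hq => rw [map_add, coeff_add, coeff_add, hp, hq, mul_add]
  | monomial n a =>
      rw [aeval_Hh_monomial]
      simp only [coeff_monomial]
      split_ifs with h
      · subst h; rfl
      · rw [mul_zero]

theorem Fh_apply (p : AMod) : Fh p = X * p := by
  induction p using Polynomial.induction_on' with
  | add p q hp hq => rw [map_add, hp, hq, mul_add]
  | monomial n a =>
      rw [Fh_monomial, ← Polynomial.monomial_one_one_eq_X, monomial_mul_monomial, one_mul,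
        add_comm]

theorem OmegaH_apply (e : ℂ) (p : AMod) :
    OmegaH u e p = (2*e) • (X * p) + aeval Hh (u.comp (X+1)) p := by
  rw [OmegaH, LinearMap.add_apply, Module.End.mul_apply, Module.algebraMap_end_apply, Fh_apply]

theorem coeff_OmegaH_succ (e : ℂ) (p : AMod) (j : ℕ) :
    (OmegaH u e p).coeff (j+1) = C (2*e) * p.coeff j +
      (u.comp (X+1)).comp (X - C ((j+1 : ℕ):ℂ)) * p.coeff (j+1) := by
  rw [OmegaH_apply, coeff_add, coeff_smul, coeff_X_mul, coeff_aeval_Hh, smul_eq_C_mul]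

theorem omegaH_pow_coeff (e : ℂ) (q : ℕ) :
    (((OmegaH u e)^q) (1:AMod)).coeff q = C ((2*e)^q) ∧
      ∀ j, q < j → (((OmegaH u e)^q) (1:AMod)).coeff j = 0 := by
  induction q with
  | zero =>
      constructor
      · simp
      · intro j hj
        rw [pow_zero, Module.End.one_apply, coeff_one, if_neg (by omega)]
  | succ q ih =>
      have step : ((OmegaH u e)^(q+1)) (1:AMod) = OmegaH u e (((OmegaH u e)^q) 1) := by
        rw [pow_succ', Module.End.mul_apply]
      constructor
      · rw [step, coeff_OmegaH_succ, ih.1, ih.2 (q+1) (Nat.lt_succ_self q), mul_zero, add_zero,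
          ← C_mul, ← pow_succ']
      · intro j hj
        obtain ⟨k, rfl⟩ := Nat.exists_eq_succ_of_ne_zero (show j ≠ 0 by omega)
        rw [step, coeff_OmegaH_succ, ih.2 k (by omega), ih.2 (k+1) (by omega), mul_zero,
          mul_zero, add_zero]

end


section IndepA

variable {f u : ℂ[X]}

theorem coeffTop (u : ℂ[X]) (e : ℂ) (he : e ≠ 0) (s : Finset (ℕ×ℕ)) (b : ℕ×ℕ → ℂ) (Q : ℕ)
    (hs : ∀ pq ∈ s, pq.2 ≤ Q)
    (h0 : ∑ pq ∈ s, b pq • ((Hh^pq.1) (((OmegaH u e)^pq.2) (1:AMod))) = 0) :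
    ∀ pq ∈ s, pq.2 = Q → b pq = 0 := by
  have h2e : (2*e) ≠ 0 := mul_ne_zero two_ne_zero he
  have hcoeff : ∑ pq ∈ s, b pq • (((X:ℂ[X]) - C (Q:ℂ))^pq.1 *
      ((((OmegaH u e)^pq.2) (1:AMod)).coeff Q)) = 0 := by
    have := congrArg (fun p : AMod => p.coeff Q) h0
    simpa [Polynomial.finset_sum_coeff, coeff_smul, coeff_Hh_pow] using this
  rw [← Finset.sum_filter_add_sum_filter_not s (fun pq => pq.2 = Q)] at hcoeff
  have hnot : ∑ pq ∈ s.filter (fun pq => ¬ pq.2 = Q), b pq • (((X:ℂ[X]) - C (Q:ℂ))^pq.1 *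
      ((((OmegaH u e)^pq.2) (1:AMod)).coeff Q)) = 0 := by
    refine Finset.sum_eq_zero fun pq hpq => ?_
    rw [Finset.mem_filter] at hpq
    rw [(omegaH_pow_coeff e pq.2).2 Q (by have := hs pq hpq.1; omega), mul_zero, smul_zero]
  rw [hnot, add_zero] at hcoeff
  have hfil : ∑ pq ∈ s.filter (fun pq => pq.2 = Q), b pq • (((X:ℂ[X]) - C (Q:ℂ))^pq.1 *
      ((((OmegaH u e)^pq.2) (1:AMod)).coeff Q)) =
      (∑ pq ∈ s.filter (fun pq => pq.2 = Q), b pq • ((X:ℂ[X]) - C (Q:ℂ))^pq.1) * C ((2*e)^Q) := by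
    rw [Finset.sum_mul]
    refine Finset.sum_congr rfl fun pq hpq => ?_
    rw [Finset.mem_filter] at hpq
    rw [hpq.2, (omegaH_pow_coeff e Q).1, smul_mul_assoc]
  rw [hfil] at hcoeff
  have hG' : ∑ pq ∈ s.filter (fun pq => pq.2 = Q), b pq • ((X:ℂ[X]) - C (Q:ℂ))^pq.1 = 0 :=
    (mul_eq_zero.mp hcoeff).resolve_right (by
      simpa [Polynomial.C_eq_zero] using pow_ne_zero Q h2e)
  set G : ℂ[X] := ∑ pq ∈ s.filter (fun pq => pq.2 = Q), b pq • (X:ℂ[X])^pq.1 with hGdef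
  have haevalG : aeval ((X:ℂ[X]) - C (Q:ℂ)) G = 0 := by
    rw [hGdef, map_sum]
    simpa [map_smul, map_pow] using hG'
  have hG : G = 0 := by
    have h1 := congrArg (aeval ((X:ℂ[X]) + C (Q:ℂ))) haevalG
    rw [← Polynomial.aeval_algHom_apply] at h1
    simpa using h1
  intro pq0 hpq0 hQ0
  have hmem : pq0 ∈ s.filter (fun pq => pq.2 = Q) := Finset.mem_filter.mpr ⟨hpq0, hQ0⟩
  have hcoeffG : G.coeff pq0.1 = b pq0 := by
    rw [hGdef, Polynomial.finset_sum_coeff]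
    rw [Finset.sum_eq_single pq0]
    · simp
    · intro pq hpq hne
      rw [Finset.mem_filter] at hpq
      have : pq.1 ≠ pq0.1 := fun h => hne (Prod.ext h (hpq.2.trans hQ0.symm))
      rw [coeff_smul, coeff_X_pow, if_neg (fun hh : pq0.1 = pq.1 => this hh.symm), smul_zero]
    · intro h; exact absurd hmem h
  rw [← hcoeffG, hG, coeff_zero]

theorem indA (u : ℂ[X]) (e : ℂ) (he : e ≠ 0) : ∀ (Q : ℕ) (s : Finset (ℕ×ℕ)) (b : ℕ×ℕ → ℂ),
    (∀ pq ∈ s, pq.2 ≤ Q) →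
    (∑ pq ∈ s, b pq • ((Hh^pq.1) (((OmegaH u e)^pq.2) (1:AMod))) = 0) →
    ∀ pq ∈ s, b pq = 0 := by
  intro Q
  induction Q with
  | zero =>
      intro s b hs h0 pq hpq
      exact coeffTop u e he s b 0 hs h0 pq hpq (Nat.le_zero.mp (hs pq hpq))
  | succ Q ih =>
      intro s b hs h0
      have htop := coeffTop u e he s b (Q+1) hs h0
      have hnot : ∑ pq ∈ s.filter (fun pq => ¬ pq.2 ≤ Q),
          b pq • ((Hh^pq.1) (((OmegaH u e)^pq.2) (1:AMod))) = 0 := by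
        refine Finset.sum_eq_zero fun pq hpq => ?_
        rw [Finset.mem_filter] at hpq
        have h2 : pq.2 = Q + 1 := by have := hs pq hpq.1; omega
        rw [htop pq hpq.1 h2, zero_smul]
      have hfil : ∑ pq ∈ s.filter (fun pq => pq.2 ≤ Q),
          b pq • ((Hh^pq.1) (((OmegaH u e)^pq.2) (1:AMod))) = 0 := by
        have := Finset.sum_filter_add_sum_filter_not s (fun pq => pq.2 ≤ Q)
          (fun pq => b pq • ((Hh^pq.1) (((OmegaH u e)^pq.2) (1:AMod))))
        rw [hnot, add_zero, h0] at this
        exact this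
      have hres := ih (s.filter (fun pq => pq.2 ≤ Q)) b
        (fun pq hpq => (Finset.mem_filter.mp hpq).2) hfil
      intro pq hpq
      by_cases h : pq.2 ≤ Q
      · exact hres pq (Finset.mem_filter.mpr ⟨hpq, h⟩)
      · exact htop pq hpq (by have := hs pq hpq; omega)

theorem indR (f u : ℂ[X]) (hu : f = C (1/2 : ℂ) * (u.comp (X + 1) - u))
    (η : SmithRE f →ₐ[ℂ] ℂ) (hη : η (SmithE' f) ≠ 0)
    (Q : ℕ) (s : Finset (ℕ×ℕ)) (b : ℕ×ℕ → ℂ)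
    (hs : ∀ pq ∈ s, pq.2 ≤ Q)
    (h0 : ∑ pq ∈ s, b pq • (SmithH f ^ pq.1 * SmithOmegaEta f u η ^ pq.2) = 0) :
    ∀ pq ∈ s, b pq = 0 := by
  set e := η (SmithE' f) with he
  have hrep := congrArg (smithRep f u hu) h0
  rw [map_sum, map_zero] at hrep
  simp only [map_smul, map_mul, map_pow, smithRep_H, smithRep_omega] at hrep
  have happ := congrArg (fun T : Module.End ℂ AMod => T (1:AMod)) hrep
  simp only [LinearMap.sum_apply, LinearMap.smul_apply, Module.End.mul_apply,
    LinearMap.zero_apply] at happ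
  exact indA u e hη Q s b hs happ

end IndepA


section Rside

variable {f u : ℂ[X]}

theorem rel_FH (f : ℂ[X]) :
    SmithF f * SmithH f = (SmithH f + 1) * SmithF f := by
  have h2 : SmithH f * SmithF f - SmithF f * SmithH f = -SmithF f := by
    simpa only [SmithH, SmithF, map_sub, map_mul, map_neg] using
      RingQuot.mkAlgHom_rel ℂ (SmithRel.hf (f := f))
  rw [sub_eq_iff_eq_add] at h2
  rw [add_mul, one_mul, h2]
  abel

theorem F_aeval (f : ℂ[X]) (g : ℂ[X]) :
    SmithF f * aeval (SmithH f) g = aeval (SmithH f) (g.comp (X+1)) * SmithF f := by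
  induction g using Polynomial.induction_on with
  | C c => rw [aeval_C, C_comp, aeval_C]; exact (Algebra.commutes c _).symm
  | add p q hp hq => rw [map_add, add_comp, map_add, mul_add, add_mul, hp, hq]
  | monomial k c ih =>
      have hsplit : (C c * X^(k+1) : ℂ[X]) = (C c * X^k) * X := by ring
      rw [hsplit, map_mul, aeval_X, ← mul_assoc, ih, mul_assoc, rel_FH, ← mul_assoc]
      congr 1
      conv_rhs => rw [mul_comp, X_comp, map_mul, map_add, aeval_X, map_one]

theorem omega_aeval (η : SmithRE f →ₐ[ℂ] ℂ) (g : ℂ[X]) :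
    SmithOmegaEta f u η * aeval (SmithH f) g =
      aeval (SmithH f) (g.comp (X+1)) * SmithOmegaEta f u η +
      aeval (SmithH f) (u.comp (X+1) * (g - g.comp (X+1))) := by
  have hcm : aeval (SmithH f) (g.comp (X+1)) * aeval (SmithH f) (u.comp (X+1)) =
      aeval (SmithH f) (u.comp (X+1)) * aeval (SmithH f) (g.comp (X+1)) := by
    rw [← map_mul, ← map_mul, mul_comm]
  have hc : algebraMap ℂ (SmithAlgebra f) (2 * η (SmithE' f)) * aeval (SmithH f) (g.comp (X+1))
      = aeval (SmithH f) (g.comp (X+1)) * algebraMap ℂ (SmithAlgebra f) (2 * η (SmithE' f)) :=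
    Algebra.commutes _ _
  have hsplit : aeval (SmithH f) (u.comp (X + 1) * (g - g.comp (X+1))) =
      aeval (SmithH f) (u.comp (X+1)) * aeval (SmithH f) g -
        aeval (SmithH f) (u.comp (X+1)) * aeval (SmithH f) (g.comp (X+1)) := by
    rw [mul_sub, map_sub, map_mul, map_mul]
  rw [SmithOmegaEta, hsplit, add_mul, mul_assoc, F_aeval, mul_add, ← mul_assoc, hc, mul_assoc,
    hcm]
  abel

end Rside

set_option maxHeartbeats 1000000 in
set_option synthInstance.maxHeartbeats 400000 in
/-- Multiplication induces an isomorphism `ℂ[H] ⊗ W(F,H) ≅ R(F,H)` of right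
`W(F,H)`-modules: `R(F,H)` is free as a right `W(F,H)`-module with basis `{H^p : p ≥ 0}`. -/
theorem smith_RFH_free_over_W (f u : ℂ[X])
    (hu : f = C (1/2 : ℂ) * (u.comp (X + 1) - u))
    (η : SmithRE f →ₐ[ℂ] ℂ) (hη : η (SmithE' f) ≠ 0) :
    Function.Injective (fun c : ℕ →₀ SmithW f u η =>
        c.sum fun p a => SmithH f ^ p * (a : SmithAlgebra f)) ∧
    Set.range (fun c : ℕ →₀ SmithW f u η =>
        c.sum fun p a => SmithH f ^ p * (a : SmithAlgebra f)) = (SmithRFH f : Set (SmithAlgebra f)) := by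
  classical
  have h2e : (2 * η (SmithE' f) : ℂ) ≠ 0 := mul_ne_zero two_ne_zero hη
  set Ω := SmithOmegaEta f u η with hΩdef
  have hW : ∀ a : SmithW f u η, ∃ g : ℂ[X], aeval Ω g = (a : SmithAlgebra f) := by
    intro a
    have h : (a : SmithAlgebra f) ∈ Algebra.adjoin ℂ {Ω} := a.2
    rw [Algebra.adjoin_singleton_eq_range_aeval] at h
    exact h
  set T : Submodule ℂ (SmithAlgebra f) :=
    Submodule.span ℂ (Set.range fun pq : ℕ × ℕ => SmithH f ^ pq.1 * Ω ^ pq.2) with hTdef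
  have hmemT : ∀ p q : ℕ, SmithH f ^ p * Ω ^ q ∈ T :=
    fun p q => Submodule.subset_span ⟨(p, q), rfl⟩
  have haevalT : ∀ (g : ℂ[X]) (q : ℕ), aeval (SmithH f) g * Ω ^ q ∈ T := by
    intro g q
    rw [aeval_eq_sum_range' (Nat.lt_succ_self g.natDegree) (SmithH f), Finset.sum_mul]
    refine Submodule.sum_mem T fun i hi => ?_
    rw [smul_mul_assoc]
    exact Submodule.smul_mem T _ (hmemT i q)
  have hUT : ∀ g : ℂ[X], aeval (SmithH f) g ∈ T := fun g => by simpa using haevalT g 0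
  have hOmulT : ∀ x ∈ T, Ω * x ∈ T := by
    intro x hx
    induction hx using Submodule.span_induction with
    | mem y hy =>
        obtain ⟨⟨p, q⟩, rfl⟩ := hy
        have key := omega_aeval (u := u) η (X ^ p)
        rw [map_pow, aeval_X] at key
        rw [← mul_assoc, key, add_mul, mul_assoc, ← pow_succ']
        exact Submodule.add_mem T (haevalT _ (q + 1)) (haevalT _ q)
    | zero => simpa using Submodule.zero_mem T
    | add a b ha hb iha ihb => rw [mul_add]; exact Submodule.add_mem T iha ihb
    | smul r a ha iha => rw [mul_smul_comm]; exact Submodule.smul_mem T r iha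
  have hHmulT : ∀ x ∈ T, SmithH f * x ∈ T := by
    intro x hx
    induction hx using Submodule.span_induction with
    | mem y hy =>
        obtain ⟨⟨p, q⟩, rfl⟩ := hy
        rw [← mul_assoc, ← pow_succ']
        exact hmemT (p + 1) q
    | zero => simpa using Submodule.zero_mem T
    | add a b ha hb iha ihb => rw [mul_add]; exact Submodule.add_mem T iha ihb
    | smul r a ha iha => rw [mul_smul_comm]; exact Submodule.smul_mem T r iha
  have hOpow : ∀ (q : ℕ), ∀ x ∈ T, Ω ^ q * x ∈ T := by
    intro q
    induction q with
    | zero => intro x hx; simpa using hx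
    | succ q ih =>
        intro x hx
        rw [pow_succ, mul_assoc]
        exact ih _ (hOmulT x hx)
  have hHpow : ∀ (p : ℕ), ∀ x ∈ T, SmithH f ^ p * x ∈ T := by
    intro p
    induction p with
    | zero => intro x hx; simpa using hx
    | succ p ih =>
        intro x hx
        rw [pow_succ, mul_assoc]
        exact ih _ (hHmulT x hx)
  have hmulT : ∀ x ∈ T, ∀ y ∈ T, x * y ∈ T := by
    intro x hx
    induction hx using Submodule.span_induction with
    | mem z hz =>
        obtain ⟨⟨p, q⟩, rfl⟩ := hz
        intro y hy
        rw [mul_assoc]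
        exact hHpow p _ (hOpow q y hy)
    | zero => intro y hy; rw [zero_mul]; exact Submodule.zero_mem T
    | add a b ha hb iha ihb =>
        intro y hy
        rw [add_mul]
        exact Submodule.add_mem T (iha y hy) (ihb y hy)
    | smul r a ha iha =>
        intro y hy
        rw [smul_mul_assoc]
        exact Submodule.smul_mem T r (iha y hy)
  have hOT : Ω ∈ T := by simpa using hmemT 0 1
  have hFT : SmithF f ∈ T := by
    have h1 : (2 * η (SmithE' f)) • SmithF f = Ω - aeval (SmithH f) (u.comp (X + 1)) := by
      rw [Algebra.smul_def, hΩdef, SmithOmegaEta, add_sub_cancel_right]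
    have h2 := congrArg (fun z => (2 * η (SmithE' f))⁻¹ • z) h1
    simp only [inv_smul_smul₀ h2e] at h2
    rw [h2]
    exact Submodule.smul_mem T _ (Submodule.sub_mem T hOT (hUT _))
  have hHT : SmithH f ∈ T := by simpa using hmemT 1 0
  have hRT : ∀ x ∈ SmithRFH f, x ∈ T := by
    intro x hx
    rw [SmithRFH] at hx
    induction hx using Algebra.adjoin_induction with
    | mem y hy =>
        rcases hy with h | h
        · rw [h]; exact hFT
        · rw [Set.mem_singleton_iff] at h; rw [h]; exact hHT
    | algebraMap r =>
        rw [Algebra.algebraMap_eq_smul_one]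
        exact Submodule.smul_mem T r (by simpa using hmemT 0 0)
    | add a b ha hb iha ihb => exact Submodule.add_mem T iha ihb
    | mul a b ha hb iha ihb => exact hmulT a iha b ihb
  have hHR : SmithH f ∈ SmithRFH f := Algebra.subset_adjoin (by simp)
  have hFR : SmithF f ∈ SmithRFH f := Algebra.subset_adjoin (by simp)
  have hUR : ∀ g : ℂ[X], aeval (SmithH f) g ∈ SmithRFH f := by
    intro g
    have h1 : aeval (SmithH f) g ∈ Algebra.adjoin ℂ {SmithH f} := by
      rw [Algebra.adjoin_singleton_eq_range_aeval]
      exact ⟨g, rfl⟩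
    exact Algebra.adjoin_le (Set.singleton_subset_iff.mpr hHR) h1
  have hOR : Ω ∈ SmithRFH f := by
    rw [hΩdef, SmithOmegaEta]
    exact add_mem (mul_mem (Subalgebra.algebraMap_mem _ _) hFR) (hUR _)
  have hWR : ∀ a : SmithW f u η, (a : SmithAlgebra f) ∈ SmithRFH f := by
    intro a
    have h : (a : SmithAlgebra f) ∈ Algebra.adjoin ℂ {Ω} := a.2
    exact Algebra.adjoin_le (Set.singleton_subset_iff.mpr hOR) h
  -- the kernel lemma
  have hWel : ∀ x ∈ SmithW f u η, ∃ g : ℂ[X], aeval Ω g = x := by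
    intro x hx
    have h : x ∈ Algebra.adjoin ℂ {Ω} := hx
    rw [Algebra.adjoin_singleton_eq_range_aeval] at h
    exact h
  have hker : ∀ (s : Finset ℕ) (v : ℕ → SmithAlgebra f), (∀ p, v p ∈ SmithW f u η) →
      (∑ p ∈ s, SmithH f ^ p * v p) = 0 → ∀ p ∈ s, v p = 0 := by
    intro s v hv hsum0
    choose g hg using fun p => hWel (v p) (hv p)
    set N := (s.sup fun p => (g p).natDegree) + 1 with hNdef
    have hgN : ∀ p ∈ s, (g p).natDegree < N :=
      fun p hp => Nat.lt_succ_of_le (Finset.le_sup (f := fun p => (g p).natDegree) hp)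
    have hsum : ∑ pq ∈ s ×ˢ Finset.range N,
        ((g pq.1).coeff pq.2) • (SmithH f ^ pq.1 * Ω ^ pq.2) = 0 := by
      rw [Finset.sum_product]
      have hinner : ∀ p ∈ s,
          (∑ q ∈ Finset.range N, ((g p).coeff q) • (SmithH f ^ p * Ω ^ q)) =
            SmithH f ^ p * v p := by
        intro p hp
        rw [← hg p, aeval_eq_sum_range' (hgN p hp) Ω, Finset.mul_sum]
        exact (Finset.sum_congr rfl fun q hq => (mul_smul_comm _ _ _)).symm
      rw [Finset.sum_congr rfl hinner]
      exact hsum0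
    have hzero := indR f u hu η hη N (s ×ˢ Finset.range N)
      (fun pq => (g pq.1).coeff pq.2)
      (fun pq hpq => by
        rw [Finset.mem_product, Finset.mem_range] at hpq
        omega) hsum
    intro p hp
    have hgp : g p = 0 := by
      refine Polynomial.ext fun q => ?_
      rw [coeff_zero]
      by_cases hq : q < N
      · exact hzero (p, q) (Finset.mem_product.mpr ⟨hp, Finset.mem_range.mpr hq⟩)
      · exact coeff_eq_zero_of_natDegree_lt (by have := hgN p hp; omega)
    rw [← hg p, hgp, map_zero]
  constructor
  · -- injectivity
    intro c c' hcc
    have hcc' : (c.sum fun p a => SmithH f ^ p * (a : SmithAlgebra f)) =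
        (c'.sum fun p a => SmithH f ^ p * (a : SmithAlgebra f)) := hcc
    set s : Finset ℕ := c.support ∪ c'.support with hsdef
    have h1 : (c.sum fun p a => SmithH f ^ p * (a : SmithAlgebra f)) =
        ∑ p ∈ s, SmithH f ^ p * ((c p : SmithAlgebra f)) :=
      Finsupp.sum_of_support_subset c Finset.subset_union_left _
        (fun p hp => by rw [ZeroMemClass.coe_zero, mul_zero])
    have h2 : (c'.sum fun p a => SmithH f ^ p * (a : SmithAlgebra f)) =
        ∑ p ∈ s, SmithH f ^ p * ((c' p : SmithAlgebra f)) :=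
      Finsupp.sum_of_support_subset c' Finset.subset_union_right _
        (fun p hp => by rw [ZeroMemClass.coe_zero, mul_zero])
    have hsub : ∑ p ∈ s, SmithH f ^ p *
        ((c p : SmithAlgebra f) - (c' p : SmithAlgebra f)) = 0 := by
      have : ∑ p ∈ s, SmithH f ^ p *
          ((c p : SmithAlgebra f) - (c' p : SmithAlgebra f)) =
          (∑ p ∈ s, SmithH f ^ p * ((c p : SmithAlgebra f))) -
          (∑ p ∈ s, SmithH f ^ p * ((c' p : SmithAlgebra f))) := by
        rw [← Finset.sum_sub_distrib]
        exact Finset.sum_congr rfl fun p hp => mul_sub _ _ _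
      rw [this, ← h1, ← h2, hcc']
      exact sub_self _
    have hv := hker s (fun p => (c p : SmithAlgebra f) - (c' p : SmithAlgebra f))
      (fun p => sub_mem (c p).2 (c' p).2) hsub
    refine Finsupp.ext fun p => ?_
    by_cases hp : p ∈ s
    · exact Subtype.ext (sub_eq_zero.mp (hv p hp))
    · rw [Finset.mem_union] at hp
      push_neg at hp
      rw [Finsupp.notMem_support_iff.mp hp.1, Finsupp.notMem_support_iff.mp hp.2]
  · -- range
    apply Set.eq_of_subset_of_subset
    · rintro y ⟨c, rfl⟩
      simp only [SetLike.mem_coe]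
      exact sum_mem fun p hp => mul_mem (pow_mem hHR p) (hWR (c p))
    · intro x hx
      rw [SetLike.mem_coe] at hx
      have hsurj : ∀ y ∈ T, ∃ c : ℕ →₀ SmithW f u η,
          (c.sum fun p a => SmithH f ^ p * (a : SmithAlgebra f)) = y := by
        intro y hy
        induction hy using Submodule.span_induction with
        | mem z hz =>
            obtain ⟨⟨p, q⟩, rfl⟩ := hz
            refine ⟨Finsupp.single p ⟨Ω ^ q,
              pow_mem (Algebra.self_mem_adjoin_singleton ℂ Ω) q⟩, ?_⟩
            rw [Finsupp.sum_single_index (by rw [ZeroMemClass.coe_zero, mul_zero])]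
        | zero => exact ⟨0, Finsupp.sum_zero_index⟩
        | add a b ha hb iha ihb =>
            obtain ⟨c₁, hc₁⟩ := iha
            obtain ⟨c₂, hc₂⟩ := ihb
            refine ⟨c₁ + c₂, ?_⟩
            rw [Finsupp.sum_add_index' (fun p => by rw [ZeroMemClass.coe_zero, mul_zero])
              (fun p b₁ b₂ => by
                rw [show ((b₁ + b₂ : SmithW f u η) : SmithAlgebra f) =
                  (b₁ : SmithAlgebra f) + (b₂ : SmithAlgebra f) from rfl, mul_add]), hc₁, hc₂]
        | smul r a ha iha =>
            obtain ⟨c₁, hc₁⟩ := iha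
            refine ⟨Finsupp.mapRange (fun w => r • w) (smul_zero r) c₁, ?_⟩
            rw [Finsupp.sum_mapRange_index (fun p => by rw [ZeroMemClass.coe_zero, mul_zero])]
            rw [← hc₁, Finsupp.smul_sum]
            refine Finset.sum_congr rfl fun p hp => ?_
            show SmithH f ^ p * ((r • c₁ p : SmithW f u η) : SmithAlgebra f) =
              r • (SmithH f ^ p * ((c₁ p : SmithW f u η) : SmithAlgebra f))
            rw [show ((r • c₁ p : SmithW f u η) : SmithAlgebra f) =
              r • ((c₁ p : SmithW f u η) : SmithAlgebra f) from rfl, mul_smul_comm]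
      obtain ⟨c, hc⟩ := hsurj x (hRT x hx)
      exact ⟨c, hc⟩
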